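/- Let N ≥ 2 and let u, v be unit vectors in ℂᴺ (with the standard Hermitian inner product ⟨·,·⟩). Let A and B be the unitary reflections A(z) = z − 2⟨u, z⟩·u and B(z) = z − 2⟨v, z⟩·v. Then the braid relation A∘B∘A = B∘A∘B holds if and only if either u and v span the same complex line, or |⟨u, v⟩| = 1/2. -/

import Mathlib

/-- For unit vectors `u, v ∈ ℂᴺ`, the unitary reflections `A z = z − 2⟨u,z⟩u` and
`B z = z − 2⟨v,z⟩v` satisfy the braid relation `A∘B∘A = B∘A∘B` if and only if `u` and `v`
span the same complex line or `|⟨u,v⟩| = 1/2`. -/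
theorem braid_relation_unitary_reflections
    (N : ℕ) (hN : 2 ≤ N)
    (u v : EuclideanSpace ℂ (Fin N)) (hu : ‖u‖ = 1) (hv : ‖v‖ = 1)
    (A B : EuclideanSpace ℂ (Fin N) → EuclideanSpace ℂ (Fin N))
    (hA : ∀ z, A z = z - (2 * (inner ℂ u z : ℂ)) • u)
    (hB : ∀ z, B z = z - (2 * (inner ℂ v z : ℂ)) • v) :
    A ∘ B ∘ A = B ∘ A ∘ B ↔
      Submodule.span ℂ {u} = Submodule.span ℂ {v} ∨ ‖(inner ℂ u v : ℂ)‖ = 1 / 2 := by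
  have hcu : (inner ℂ u u : ℂ) = 1 := by
    rw [inner_self_eq_norm_sq_to_K, hu]; norm_num
  have hcv : (inner ℂ v v : ℂ) = 1 := by
    rw [inner_self_eq_norm_sq_to_K, hv]; norm_num
  have hconj : (inner ℂ v u : ℂ) = starRingEnd ℂ (inner ℂ u v) := by
    rw [inner_conj_symm]
  have hcd : (inner ℂ u v : ℂ) * inner ℂ v u = ((‖(inner ℂ u v : ℂ)‖ ^ 2 : ℝ) : ℂ) := by
    rw [hconj, Complex.mul_conj, Complex.normSq_eq_norm_sq]
  have key : ∀ z, A (B (A z)) - B (A (B z)) =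
      ((2 : ℂ) - 8 * (inner ℂ u v * inner ℂ v u)) •
        ((inner ℂ u z : ℂ) • u - (inner ℂ v z : ℂ) • v) := by
    intro z
    simp only [hA, hB, inner_sub_right, inner_smul_right, hcu, hcv]
    module
  constructor
  · intro h
    by_cases hc2 : ‖(inner ℂ u v : ℂ)‖ = 1 / 2
    · exact Or.inr hc2
    left
    have hne : (2 : ℂ) - 8 * (inner ℂ u v * inner ℂ v u) ≠ 0 := by
      rw [hcd]
      intro hcon
      apply hc2
      have h4 : ((‖(inner ℂ u v : ℂ)‖ ^ 2 : ℝ) : ℂ) = (1 / 4 : ℂ) := by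
        linear_combination -(1 / 8 : ℂ) * hcon
      have h4' : ((‖(inner ℂ u v : ℂ)‖ ^ 2 : ℝ) : ℂ) = ((1 / 4 : ℝ) : ℂ) := by
        rw [h4]; norm_num
      have h5 : (‖(inner ℂ u v : ℂ)‖ ^ 2 : ℝ) = 1 / 4 := Complex.ofReal_inj.mp h4'
      have hn : (0:ℝ) ≤ ‖(inner ℂ u v : ℂ)‖ := norm_nonneg _
      nlinarith
    have hz : ∀ z, (inner ℂ u z : ℂ) • u = (inner ℂ v z : ℂ) • v := by
      intro z
      have h1 : A (B (A z)) = B (A (B z)) := congrFun h z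
      have h2 := key z
      rw [h1, sub_self] at h2
      have h3 := (smul_eq_zero.mp h2.symm).resolve_left hne
      exact sub_eq_zero.mp h3
    have huv : u = (inner ℂ v u : ℂ) • v := by
      have := hz u
      rwa [hcu, one_smul] at this
    have hvu0 : (inner ℂ v u : ℂ) ≠ 0 := by
      intro h0
      rw [h0, zero_smul] at huv
      rw [huv] at hu
      simp at hu
    apply le_antisymm
    · rw [Submodule.span_singleton_le_iff_mem, Submodule.mem_span_singleton]
      exact ⟨inner ℂ v u, huv.symm⟩
    · rw [Submodule.span_singleton_le_iff_mem, Submodule.mem_span_singleton]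
      refine ⟨(inner ℂ v u : ℂ)⁻¹, ?_⟩
      calc ((inner ℂ v u : ℂ))⁻¹ • u = (inner ℂ v u : ℂ)⁻¹ • ((inner ℂ v u : ℂ) • v) := by
            rw [← huv]
        _ = v := by rw [smul_smul, inv_mul_cancel₀ hvu0, one_smul]
  · intro h
    funext z
    simp only [Function.comp_apply]
    have h2 := key z
    rcases h with hsp | hn
    · have hmem : u ∈ Submodule.span ℂ {v} := by
        rw [← hsp]; exact Submodule.mem_span_singleton_self u
      obtain ⟨μ, hμ⟩ := Submodule.mem_span_singleton.mp hmem
      have hμ1 : μ * starRingEnd ℂ μ = 1 := by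
        have : ‖μ • v‖ = 1 := by rw [hμ]; exact hu
        rw [norm_smul, hv, mul_one] at this
        rw [Complex.mul_conj, Complex.normSq_eq_norm_sq, this]
        norm_num
      have hz0 : (inner ℂ u z : ℂ) • u - (inner ℂ v z : ℂ) • v = 0 := by
        rw [← hμ, inner_smul_left, smul_smul]
        rw [show starRingEnd ℂ μ * inner ℂ v z * μ = (μ * starRingEnd ℂ μ) * inner ℂ v z by ring,
          hμ1, one_mul, sub_self]
      rw [hz0, smul_zero, sub_eq_zero] at h2
      exact h2
    · have : (2 : ℂ) - 8 * (inner ℂ u v * inner ℂ v u) = 0 := by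
        rw [hcd, hn]
        norm_num
      rw [this, zero_smul, sub_eq_zero] at h2
      exact h2
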